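/- For b ∈ (0, 1/2), the function ℓ(r) = exp((log(1+r))^b) − 1 belongs to the class 𝒢: for every a>0 there is C(a)>0 with sup_{r>1} (∫_1^r ℓ(s)/s ds) exp(−(a/ℓ(r)) ∫_1^r ℓ(s)/s ds) ≤ C(a). -/

import Mathlib

open MeasureTheory

lemma aux_pos (b : ℝ) {r : ℝ} (hr : 0 < r) :
    0 < Real.exp (Real.log (1 + r) ^ b) - 1 := by
  have h1 : 0 < Real.log (1 + r) := Real.log_pos (by linarith)
  have h2 : 0 < Real.log (1 + r) ^ b := Real.rpow_pos_of_pos h1 b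
  linarith [Real.add_one_le_exp (Real.log (1 + r) ^ b)]

lemma aux_mono (b : ℝ) (hb0 : 0 < b) {s t : ℝ} (hs : 0 ≤ s) (hst : s ≤ t) :
    Real.exp (Real.log (1 + s) ^ b) - 1 ≤ Real.exp (Real.log (1 + t) ^ b) - 1 := by
  have hlog0 : 0 ≤ Real.log (1 + s) := Real.log_nonneg (by linarith)
  have hlog : Real.log (1 + s) ≤ Real.log (1 + t) := Real.log_le_log (by linarith) (by linarith)
  gcongr

lemma aux_cont (b : ℝ) (hb0 : 0 < b) :
    ContinuousOn (fun r => Real.exp (Real.log (1 + r) ^ b) - 1) (Set.Ici 0) := by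
  have h1 : ContinuousOn (fun r : ℝ => Real.log (1 + r)) (Set.Ici 0) :=
    ContinuousOn.log ((continuous_const.add continuous_id).continuousOn)
      (fun x hx => by simp only [Set.mem_Ici] at hx; positivity)
  exact ((h1.rpow_const (fun x _ => Or.inr hb0.le)).rexp).sub continuousOn_const

lemma aux_integrable (b : ℝ) (hb0 : 0 < b) {u v : ℝ} (hu : 1 ≤ u) (huv : u ≤ v) :
    IntervalIntegrable (fun s => (Real.exp (Real.log (1 + s) ^ b) - 1) / s) volume u v := by
  apply ContinuousOn.intervalIntegrable
  apply ContinuousOn.div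
  · exact (aux_cont b hb0).mono (by rw [Set.uIcc_of_le huv]; intro x hx; simp only [Set.mem_Ici]; linarith [hx.1])
  · exact continuousOn_id
  · intro x hx
    rw [Set.uIcc_of_le huv] at hx
    have h0 : (0:ℝ) < x := by linarith [hx.1]
    simpa using h0.ne'

lemma int_one_div_one_add {u v : ℝ} (hu : 0 ≤ u) (huv : u ≤ v) :
    ∫ s in u..v, 1 / (1 + s) = Real.log (1 + v) - Real.log (1 + u) := by
  apply intervalIntegral.integral_eq_sub_of_hasDerivAt
  · intro x hx
    rw [Set.uIcc_of_le huv] at hx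
    have hx0 : (0:ℝ) < 1 + x := by linarith [hx.1]
    have h2 : HasDerivAt (fun y : ℝ => 1 + y) 1 x := (hasDerivAt_id x).const_add 1
    simpa [one_div, Function.comp_def] using (Real.hasDerivAt_log hx0.ne').comp x h2
  · apply ContinuousOn.intervalIntegrable
    apply ContinuousOn.div continuousOn_const ((continuous_const.add continuous_id).continuousOn)
    intro x hx
    rw [Set.uIcc_of_le huv] at hx
    have : (0:ℝ) < 1 + x := by linarith [hx.1]
    exact this.ne'

lemma F_nonneg (b : ℝ) {r : ℝ} (hr : 1 ≤ r) :
    0 ≤ ∫ s in (1:ℝ)..r, (Real.exp (Real.log (1 + s) ^ b) - 1) / s := by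
  apply intervalIntegral.integral_nonneg hr
  intro x hx
  have hx1 : (0:ℝ) < x := by linarith [hx.1]
  exact div_nonneg (aux_pos b hx1).le hx1.le

lemma F_upper (b : ℝ) (hb0 : 0 < b) {r : ℝ} (hr : 1 < r) :
    (∫ s in (1:ℝ)..r, (Real.exp (Real.log (1 + s) ^ b) - 1) / s) ≤
      (Real.exp (Real.log (1 + r) ^ b) - 1) * Real.log (1 + r) := by
  have hℓr : 0 ≤ Real.exp (Real.log (1 + r) ^ b) - 1 := (aux_pos b (by linarith)).le
  have key : (∫ s in (1:ℝ)..r, (Real.exp (Real.log (1 + s) ^ b) - 1) / s) ≤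
      ∫ s in (1:ℝ)..r, (Real.exp (Real.log (1 + r) ^ b) - 1) * (1 / s) := by
    apply intervalIntegral.integral_mono_on hr.le (aux_integrable b hb0 le_rfl hr.le)
    · apply ContinuousOn.intervalIntegrable
      apply ContinuousOn.mul continuousOn_const
      apply ContinuousOn.div continuousOn_const continuousOn_id
      intro x hx
      rw [Set.uIcc_of_le hr.le] at hx
      have h0 : (0:ℝ) < x := by linarith [hx.1]
      simpa using h0.ne'
    · intro x hx
      obtain ⟨hx1, hx2⟩ := hx
      have hx0 : (0:ℝ) < x := by linarith
      rw [mul_one_div]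
      gcongr
      exact Real.log_nonneg (by linarith)
  rw [intervalIntegral.integral_const_mul, integral_one_div_of_pos one_pos (by linarith)] at key
  calc (∫ s in (1:ℝ)..r, (Real.exp (Real.log (1 + s) ^ b) - 1) / s)
      ≤ (Real.exp (Real.log (1 + r) ^ b) - 1) * Real.log (r / 1) := key
    _ ≤ (Real.exp (Real.log (1 + r) ^ b) - 1) * Real.log (1 + r) := by
        have h : Real.log (r / 1) ≤ Real.log (1 + r) := by
          rw [div_one]; exact Real.log_le_log (by linarith) (by linarith)
        exact mul_le_mul_of_nonneg_left h hℓr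

lemma F_lower (b : ℝ) (hb0 : 0 < b) {u r : ℝ} (hu : 1 ≤ u) (hur : u ≤ r) :
    (Real.exp (Real.log (1 + u) ^ b) - 1) * (Real.log (1 + r) - Real.log (1 + u)) ≤
      ∫ s in (1:ℝ)..r, (Real.exp (Real.log (1 + s) ^ b) - 1) / s := by
  have i1 := aux_integrable b hb0 le_rfl hu
  have i2 := aux_integrable b hb0 hu hur
  have hℓu : 0 ≤ Real.exp (Real.log (1 + u) ^ b) - 1 := (aux_pos b (by linarith)).le
  have hsplit : (∫ s in (1:ℝ)..u, (Real.exp (Real.log (1 + s) ^ b) - 1) / s) +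
      (∫ s in u..r, (Real.exp (Real.log (1 + s) ^ b) - 1) / s) =
      ∫ s in (1:ℝ)..r, (Real.exp (Real.log (1 + s) ^ b) - 1) / s :=
    intervalIntegral.integral_add_adjacent_intervals i1 i2
  have h1 : 0 ≤ ∫ s in (1:ℝ)..u, (Real.exp (Real.log (1 + s) ^ b) - 1) / s := F_nonneg b hu
  have h2 : (Real.exp (Real.log (1 + u) ^ b) - 1) * (Real.log (1 + r) - Real.log (1 + u)) ≤
      ∫ s in u..r, (Real.exp (Real.log (1 + s) ^ b) - 1) / s := by
    have key : (∫ s in u..r, (Real.exp (Real.log (1 + u) ^ b) - 1) * (1 / (1 + s))) ≤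
        ∫ s in u..r, (Real.exp (Real.log (1 + s) ^ b) - 1) / s := by
      apply intervalIntegral.integral_mono_on hur ?_ i2
      · intro x hx
        have hx0 : (0:ℝ) < x := by linarith [hx.1]
        have hstep : (Real.exp (Real.log (1 + u) ^ b) - 1) * (1 / (1 + x)) ≤
            (Real.exp (Real.log (1 + x) ^ b) - 1) * (1 / x) := by
          apply mul_le_mul (aux_mono b hb0 (by linarith) hx.1) _ (by positivity)
            (aux_pos b hx0).le
          apply one_div_le_one_div_of_le hx0 (by linarith)
        simpa [mul_one_div, div_eq_mul_inv] using hstep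
      · apply ContinuousOn.intervalIntegrable
        apply ContinuousOn.mul continuousOn_const
        apply ContinuousOn.div continuousOn_const ((continuous_const.add continuous_id).continuousOn)
        intro x hx
        rw [Set.uIcc_of_le hur] at hx
        have : (0:ℝ) < 1 + x := by linarith [hx.1]
        exact this.ne'
    rw [intervalIntegral.integral_const_mul, int_one_div_one_add (by linarith) hur] at key
    exact key
  linarith

lemma aux_exp_c (X : ℝ) (h4 : 4 ≤ X) :
    (Real.exp X - 1) * (1 / (2 * Real.exp 2)) ≤ Real.exp (X - 2) - 1 := by
  have he2 : (3:ℝ) ≤ Real.exp 2 := by nlinarith [Real.add_one_le_exp (2:ℝ)]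
  have he2pos : (0:ℝ) < Real.exp 2 := Real.exp_pos 2
  have hE4 : Real.exp 2 * Real.exp 2 ≤ Real.exp X := by
    rw [← Real.exp_add]; exact Real.exp_le_exp.2 (by linarith)
  have hErel : Real.exp X = Real.exp (X - 2) * Real.exp 2 := by
    rw [← Real.exp_add]; ring_nf
  have hpoly : Real.exp X - 1 ≤ (Real.exp (X - 2) - 1) * (2 * Real.exp 2) := by
    nlinarith
  rw [mul_one_div, div_le_iff₀ (by positivity)]
  linarith

/-- The class 𝒢 of positive continuous functions satisfying the integral growth condition. -/
def memG (ℓ : ℝ → ℝ) : Prop :=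
  ContinuousOn ℓ (Set.Ioi 0) ∧ (∀ r > 0, 0 < ℓ r) ∧
    ∀ a > 0, ∃ C > 0, ∀ r > 1,
      (∫ s in (1:ℝ)..r, ℓ s / s) *
        Real.exp (-(a / ℓ r) * ∫ s in (1:ℝ)..r, ℓ s / s) ≤ C

set_option maxHeartbeats 1000000 in
theorem stmt_12 (b : ℝ) (hb0 : 0 < b) (hb : b < 1 / 2) :
    memG (fun r => Real.exp (Real.log (1 + r) ^ b) - 1) := by
  refine ⟨(aux_cont b hb0).mono Set.Ioi_subset_Ici_self, fun r hr => aux_pos b hr, ?_⟩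
  intro a ha
  set c : ℝ := 1 / (2 * Real.exp 2) with hc_def
  have hc : 0 < c := by positivity
  set L1 : ℝ := ((1 + 1 / b) / (a * c)) ^ (1 / (1 - 2 * b)) with hL1_def
  set M : ℝ := max (2 + (4:ℝ) ^ (1 / b)) L1 with hM_def
  have h4pow : (0:ℝ) ≤ (4:ℝ) ^ (1 / b) := Real.rpow_nonneg (by norm_num) _
  have hM2 : 2 ≤ M := le_trans (by linarith) (le_max_left _ _)
  have hMb : 0 < M ^ b := Real.rpow_pos_of_pos (by linarith) b
  have hCpos : 0 < (Real.exp (M ^ b) - 1) * M + 1 := by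
    nlinarith [Real.add_one_le_exp (M ^ b)]
  refine ⟨(Real.exp (M ^ b) - 1) * M + 1, hCpos, ?_⟩
  intro r hr
  show (∫ s in (1:ℝ)..r, (Real.exp (Real.log (1 + s) ^ b) - 1) / s) *
      Real.exp (-(a / (Real.exp (Real.log (1 + r) ^ b) - 1)) *
        ∫ s in (1:ℝ)..r, (Real.exp (Real.log (1 + s) ^ b) - 1) / s) ≤
      (Real.exp (M ^ b) - 1) * M + 1
  set L := Real.log (1 + r) with hLdef
  have hLpos : 0 < L := Real.log_pos (by linarith)
  have hexpL : Real.exp L = 1 + r := Real.exp_log (by linarith)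
  set F := ∫ s in (1:ℝ)..r, (Real.exp (Real.log (1 + s) ^ b) - 1) / s with hFdef
  have hF0 : 0 ≤ F := F_nonneg b hr.le
  have hFub : F ≤ (Real.exp (L ^ b) - 1) * L := F_upper b hb0 hr
  have hellpos : 0 < Real.exp (L ^ b) - 1 := aux_pos b (by linarith)
  have hLbpos : 0 < L ^ b := Real.rpow_pos_of_pos hLpos b
  by_cases hcase : L ≤ M
  · -- small case
    have hexp1 : Real.exp (-(a / (Real.exp (L ^ b) - 1)) * F) ≤ 1 := by
      rw [Real.exp_le_one_iff]
      have h1 : 0 ≤ a / (Real.exp (L ^ b) - 1) := by positivity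
      linarith [mul_nonneg h1 hF0]
    have hLb : L ^ b ≤ M ^ b := Real.rpow_le_rpow hLpos.le hcase hb0.le
    calc F * Real.exp (-(a / (Real.exp (L ^ b) - 1)) * F)
        ≤ F * 1 := mul_le_mul_of_nonneg_left hexp1 hF0
      _ = F := mul_one F
      _ ≤ (Real.exp (L ^ b) - 1) * L := hFub
      _ ≤ (Real.exp (M ^ b) - 1) * M := by
          apply mul_le_mul _ hcase hLpos.le
            (by linarith [Real.add_one_le_exp (M ^ b), hMb])
          have := Real.exp_le_exp.2 hLb
          linarith
      _ ≤ (Real.exp (M ^ b) - 1) * M + 1 := by linarith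
  · push_neg at hcase
    have hb1 : b ≤ 1 := by linarith
    have h12b : 0 < 1 - 2 * b := by linarith
    have h4L : (4:ℝ) ≤ L ^ b := by
      have h1 : (4:ℝ) ^ (1 / b) ≤ L := by
        have h2 := le_max_left (2 + (4:ℝ) ^ (1 / b)) L1
        rw [← hM_def] at h2
        linarith
      calc (4:ℝ) = ((4:ℝ) ^ (1 / b)) ^ b := by
            rw [← Real.rpow_mul (by norm_num : (0:ℝ) ≤ 4), one_div,
              inv_mul_cancel₀ hb0.ne', Real.rpow_one]
        _ ≤ L ^ b := Real.rpow_le_rpow h4pow h1 hb0.le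
    set δ := L ^ (1 - b) with hδdef
    have hδpos : 0 < δ := Real.rpow_pos_of_pos hLpos _
    have hδL : δ * L ^ b = L := by
      rw [hδdef, ← Real.rpow_add hLpos]
      norm_num
    have hδle : δ ≤ L / 4 := by nlinarith
    set u := Real.exp (L - δ) - 1 with hudef
    have h1u : (1:ℝ) + u = Real.exp (L - δ) := by rw [hudef]; ring
    have hLu : Real.log (1 + u) = L - δ := by rw [h1u, Real.log_exp]
    have hu1 : 1 ≤ u := by
      have h1 : (1:ℝ) ≤ L - δ := by linarith
      have h2 := Real.add_one_le_exp (L - δ)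
      rw [hudef]; linarith
    have hur : u ≤ r := by
      have h2 : Real.exp (L - δ) ≤ 1 + r := by
        rw [← hexpL]; exact Real.exp_le_exp.2 (by linarith)
      rw [hudef]; linarith
    have hLδpos : 0 < L - δ := by linarith
    have hkey : L ^ b - 2 ≤ (L - δ) ^ b := by
      have hLδb : 0 < (L - δ) ^ b := Real.rpow_pos_of_pos hLδpos b
      have ht : (1:ℝ) ≤ L / (L - δ) := (one_le_div hLδpos).2 (by linarith)
      have hA : (L / (L - δ)) ^ b ≤ L / (L - δ) := by
        calc (L / (L - δ)) ^ b ≤ (L / (L - δ)) ^ (1:ℝ) :=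
              Real.rpow_le_rpow_of_exponent_le ht hb1
          _ = L / (L - δ) := Real.rpow_one _
      rw [Real.div_rpow hLpos.le hLδpos.le, div_le_div_iff₀ hLδb hLδpos] at hA
      -- hA : L ^ b * (L - δ) ≤ L / ... careful
      have h5 : L * (L ^ b - 1) ≤ L * (L - δ) ^ b := by nlinarith [hA, hδL]
      have h6 : L ^ b - 1 ≤ (L - δ) ^ b := le_of_mul_le_mul_left h5 hLpos
      linarith
    have hFlb : (Real.exp ((L - δ) ^ b) - 1) * δ ≤ F := by
      have h1 := F_lower b hb0 hu1 hur
      rw [hLu, ← hLdef] at h1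
      rw [show L - (L - δ) = δ from by ring] at h1
      exact h1
    have hℓu_lb : c * (Real.exp (L ^ b) - 1) ≤ Real.exp (L ^ b - 2) - 1 := by
      have := aux_exp_c (L ^ b) h4L
      rw [hc_def]; linarith
    have hF_big : c * (Real.exp (L ^ b) - 1) * δ ≤ F := by
      have h1 : Real.exp (L ^ b - 2) - 1 ≤ Real.exp ((L - δ) ^ b) - 1 := by
        have := Real.exp_le_exp.2 hkey; linarith
      calc c * (Real.exp (L ^ b) - 1) * δ ≤ (Real.exp ((L - δ) ^ b) - 1) * δ := by
            apply mul_le_mul_of_nonneg_right _ hδpos.le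
            linarith
        _ ≤ F := hFlb
    have hx : a * (c * δ) ≤ a / (Real.exp (L ^ b) - 1) * F := by
      have h2 : a / (Real.exp (L ^ b) - 1) * F = a * F / (Real.exp (L ^ b) - 1) :=
        div_mul_eq_mul_div a (Real.exp (L ^ b) - 1) F
      rw [h2, le_div_iff₀ hellpos]
      calc a * (c * δ) * (Real.exp (L ^ b) - 1)
          = a * (c * (Real.exp (L ^ b) - 1) * δ) := by ring
        _ ≤ a * F := mul_le_mul_of_nonneg_left hF_big ha.le
    have hlogL : Real.log L ≤ L ^ b / b := by
      have h1 : Real.log (L ^ b) = b * Real.log L := Real.log_rpow hLpos b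
      have h2 : Real.log (L ^ b) ≤ L ^ b - 1 := Real.log_le_sub_one_of_pos hLbpos
      rw [le_div_iff₀ hb0]; nlinarith [h1, h2]
    have hδlow : (1 + 1 / b) * L ^ b ≤ a * (c * δ) := by
      have hL1L : L1 ≤ L := le_trans (le_max_right _ _) hcase.le
      have hbase : (0:ℝ) ≤ (1 + 1 / b) / (a * c) := by positivity
      have hL1nn : 0 ≤ L1 := Real.rpow_nonneg hbase _
      have hL1eq : L1 ^ (1 - 2 * b) = (1 + 1 / b) / (a * c) := by
        rw [hL1_def, ← Real.rpow_mul hbase, one_div_mul_cancel h12b.ne', Real.rpow_one]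
      have hmono2 : L1 ^ (1 - 2 * b) ≤ L ^ (1 - 2 * b) :=
        Real.rpow_le_rpow hL1nn hL1L h12b.le
      have hqq : (1 + 1 / b) / (a * c) ≤ L ^ (1 - 2 * b) := hL1eq ▸ hmono2
      have hsplit2 : L ^ (1 - 2 * b) * L ^ b = δ := by
        rw [hδdef, ← Real.rpow_add hLpos]; ring_nf
      have h3 : (1 + 1 / b) ≤ a * c * L ^ (1 - 2 * b) := by
        rw [div_le_iff₀ (by positivity)] at hqq; linarith
      calc (1 + 1 / b) * L ^ b ≤ (a * c * L ^ (1 - 2 * b)) * L ^ b :=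
            mul_le_mul_of_nonneg_right h3 hLbpos.le
        _ = a * (c * δ) := by rw [← hsplit2]; ring
    have hexpfin : Real.exp (L ^ b) * L * Real.exp (-(a * (c * δ))) ≤ 1 := by
      have h1 : Real.exp (L ^ b) * L = Real.exp (L ^ b + Real.log L) := by
        rw [Real.exp_add, Real.exp_log hLpos]
      rw [h1, ← Real.exp_add, Real.exp_le_one_iff]
      have e1 : (1 + 1 / b) * L ^ b = L ^ b + L ^ b / b := by field_simp
      linarith
    calc F * Real.exp (-(a / (Real.exp (L ^ b) - 1)) * F)
        ≤ (Real.exp (L ^ b) * L) * Real.exp (-(a * (c * δ))) := by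
          apply mul_le_mul _ (Real.exp_le_exp.2 (by linarith)) (Real.exp_pos _).le
            (by positivity)
          calc F ≤ (Real.exp (L ^ b) - 1) * L := hFub
            _ ≤ Real.exp (L ^ b) * L := mul_le_mul_of_nonneg_right (by linarith) hLpos.le
      _ ≤ 1 := hexpfin
      _ ≤ (Real.exp (M ^ b) - 1) * M + 1 := by
          have h9 : 0 ≤ (Real.exp (M ^ b) - 1) * M :=
            mul_nonneg (by linarith [Real.add_one_le_exp (M ^ b), hMb]) (by linarith)
          linarith
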